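/- Let n be a real parameter with 2 < n < 4, let R > 0, and let φ : [0,R] → ℝ be twice continuously differentiable with φ ≥ 0, φ(0) = 1, φ'(0) = 0, and φ(R) = 0. Then there exist constants C > 0 and ε0 > 0 such that for all ε ∈ (0, ε0): | ∫_0^R φ(r)^{2n/(n−2)}·(ε+r²)^{−n}·r^{n−1} dr − (Γ(n/2)²/(2·Γ(n)))·ε^{−n/2} | ≤ C·ε^{(2−n)/2}. -/

import Mathlib

open Real Set

noncomputable section

open MeasureTheory intervalIntegral

section Helpers


lemma real_beta {a b : ℝ} (ha : 0 < a) (hb : 0 < b) :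
    ∫ x in (0:ℝ)..1, x ^ (a-1) * (1-x) ^ (b-1)
      = Real.Gamma a * Real.Gamma b / Real.Gamma (a+b) := by
  have key := Complex.Gamma_mul_Gamma_eq_betaIntegral (s := (a:ℂ)) (t := (b:ℂ))
      (by simpa using ha) (by simpa using hb)
  have hBeta : Complex.betaIntegral a b
      = ((∫ x in (0:ℝ)..1, x ^ (a-1) * (1-x) ^ (b-1) : ℝ) : ℂ) := by
    rw [Complex.betaIntegral, ← intervalIntegral.integral_ofReal]
    refine intervalIntegral.integral_congr fun x hx => ?_
    rw [uIcc_of_le (by norm_num : (0:ℝ) ≤ 1)] at hx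
    have h1 : ((x:ℂ)) ^ ((a:ℂ)-1) = ((x ^ (a-1) : ℝ) : ℂ) := by
      rw [Complex.ofReal_cpow hx.1]; norm_cast
    have h2 : ((1:ℂ) - (x:ℂ)) ^ ((b:ℂ)-1) = (((1-x) ^ (b-1) : ℝ) : ℂ) := by
      rw [show ((1:ℂ) - x) = (((1-x : ℝ)):ℂ) by push_cast; ring,
        Complex.ofReal_cpow (by linarith [hx.2] : (0:ℝ) ≤ 1 - x)]
      norm_cast
    rw [h1, h2]; norm_cast
  have hG : Complex.Gamma ((a:ℂ) + b) = (Real.Gamma (a+b) : ℂ) := by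
    rw [← Complex.ofReal_add, Complex.Gamma_ofReal]
  rw [Complex.Gamma_ofReal, Complex.Gamma_ofReal, hG, hBeta] at key
  have key2 : Real.Gamma a * Real.Gamma b
      = Real.Gamma (a+b) * ∫ x in (0:ℝ)..1, x ^ (a-1) * (1-x) ^ (b-1) := by
    exact_mod_cast key
  have hGpos : (0:ℝ) < Real.Gamma (a+b) := Real.Gamma_pos_of_pos (by linarith)
  field_simp
  linarith [key2]


lemma cov_pointwise {n ε : ℝ} (hε : 0 < ε) {r : ℝ} (hr : 0 < r) :
    |2*ε*r/(ε+r^2)^2| * ((r^2/(ε+r^2)) ^ (n/2-1) * (1 - r^2/(ε+r^2)) ^ (n/2-1))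
      = (2 * ε ^ (n/2)) * (r ^ (n-1) * (ε + r^2) ^ (-n)) := by
  have hS : (0:ℝ) < ε + r^2 := by positivity
  have h2 : (1:ℝ) - r^2/(ε+r^2) = ε/(ε+r^2) := by field_simp; ring
  have hr2 : ((r^2:ℝ)) ^ (n/2-1) = r ^ (n-2) := by
    rw [← Real.rpow_natCast r 2, ← Real.rpow_mul hr.le]
    norm_num
    rw [show (2:ℝ) * (n/2-1) = n - 2 by ring]
  have hS2 : ((ε+r^2:ℝ))^2 = (ε+r^2)^(2:ℝ) := by
    rw [show (2:ℝ) = ((2:ℕ):ℝ) by norm_num, Real.rpow_natCast]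
  have er : r ^ (n-1) = r * r^(n-2) := by
    nth_rewrite 2 [show r = r ^ (1:ℝ) by rw [Real.rpow_one]]
    rw [← Real.rpow_add hr, show (1:ℝ) + (n-2) = n-1 by ring]
  have ee : ε ^ (n/2) = ε * ε^(n/2-1) := by
    nth_rewrite 2 [show ε = ε ^ (1:ℝ) by rw [Real.rpow_one]]
    rw [← Real.rpow_add hε, show (1:ℝ) + (n/2-1) = n/2 by ring]
  have eS : ((ε+r^2) ^ (-n) : ℝ)
      = ((ε+r^2)^(2:ℝ) * ((ε+r^2)^(n/2-1) * (ε+r^2)^(n/2-1)))⁻¹ := by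
    rw [← Real.rpow_add hS, ← Real.rpow_add hS, ← Real.rpow_neg hS.le,
      show -((2:ℝ)+(n/2-1+(n/2-1))) = -n by ring]
  rw [h2, abs_of_pos (by positivity), Real.div_rpow (by positivity) hS.le,
    Real.div_rpow hε.le hS.le, hr2, er, ee, eS, hS2]
  have h1 : ((ε+r^2:ℝ))^(2:ℝ) ≠ 0 := by positivity
  have h3 : ((ε+r^2:ℝ))^(n/2-1) ≠ 0 := by positivity
  field_simp

lemma cov_setup {n ε : ℝ} (hn2 : 2 < n) (hε : 0 < ε) :
    (∫ u in Ioo (0:ℝ) 1, u ^ (n/2-1) * (1-u) ^ (n/2-1))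
      = ∫ r in Ioi (0:ℝ), (2 * ε ^ (n/2)) * (r ^ (n-1) * (ε + r^2) ^ (-n))
    ∧ IntegrableOn (fun r => (2 * ε ^ (n/2)) * (r ^ (n-1) * (ε + r^2) ^ (-n))) (Ioi (0:ℝ)) := by
  set f : ℝ → ℝ := fun r => r^2/(ε+r^2) with hf
  set f' : ℝ → ℝ := fun r => 2*ε*r/(ε+r^2)^2 with hf'
  have hSpos : ∀ r : ℝ, (0:ℝ) < ε + r^2 := fun r => by positivity
  have hd : ∀ r ∈ Ioi (0:ℝ), HasDerivWithinAt f (f' r) (Ioi 0) r := by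
    intro r _
    have h1 : HasDerivAt (fun x : ℝ => x^2) (2*r) r := by
      simpa using hasDerivAt_pow 2 r
    have h2 : HasDerivAt (fun x : ℝ => ε + x^2) (2*r) r := by
      exact h1.const_add ε
    have h3 := h1.div h2 (hSpos r).ne'
    have : (2*r*(ε+r^2) - r^2*(2*r))/(ε+r^2)^2 = f' r := by
      rw [hf']; field_simp; ring
    rw [this] at h3
    exact h3.hasDerivWithinAt
  have hinj : InjOn f (Ioi (0:ℝ)) := by
    intro r hr s hs h
    simp only [hf, mem_Ioi] at *
    have h4 : r^2 * (ε + s^2) = s^2 * (ε + r^2) := by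
      field_simp at h
      linarith [h]
    have h5 : (r - s) * (r + s) = 0 := by nlinarith
    rcases mul_eq_zero.mp h5 with h6 | h6
    · linarith
    · linarith
  have himg : f '' (Ioi (0:ℝ)) = Ioo (0:ℝ) 1 := by
    ext u
    constructor
    · rintro ⟨r, hr, rfl⟩
      simp only [mem_Ioi] at hr
      constructor
      · positivity
      · rw [div_lt_one (hSpos r)]; nlinarith
    · rintro ⟨hu0, hu1⟩
      refine ⟨Real.sqrt (ε*u/(1-u)), ?_, ?_⟩
      · simp only [mem_Ioi]
        apply Real.sqrt_pos.mpr
        have : 0 < 1 - u := by linarith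
        positivity
      · have h1u : 0 < 1 - u := by linarith
        have hq : (0:ℝ) ≤ ε*u/(1-u) := by positivity
        simp only [hf, Real.sq_sqrt hq]
        rw [div_eq_iff (by positivity : (0:ℝ) < ε + ε*u/(1-u)).ne']
        field_simp
        ring
  have key := MeasureTheory.integral_image_eq_integral_abs_deriv_smul measurableSet_Ioi hd hinj
      (fun u => u ^ (n/2-1) * (1-u) ^ (n/2-1))
  rw [himg] at key
  have hptw : ∀ r ∈ Ioi (0:ℝ), |f' r| • ((f r) ^ (n/2-1) * (1 - f r) ^ (n/2-1))
      = (2 * ε ^ (n/2)) * (r ^ (n-1) * (ε + r^2) ^ (-n)) := by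
    intro r hr
    simp only [mem_Ioi] at hr
    rw [smul_eq_mul]
    exact cov_pointwise hε hr
  constructor
  · rw [key]
    exact setIntegral_congr_fun measurableSet_Ioi hptw
  · have hIβ : IntegrableOn (fun u => u ^ (n/2-1) * (1-u) ^ (n/2-1)) (Ioo (0:ℝ) 1) := by
      apply (ContinuousOn.integrableOn_compact isCompact_Icc ?_).mono_set Ioo_subset_Icc_self
      intro x hx
      apply ContinuousWithinAt.mul
      · exact ((Real.continuousAt_rpow_const x _ (Or.inr (by linarith))).continuousWithinAt)
      · exact (((Real.continuousAt_rpow_const (1-x) _ (Or.inr (by linarith))).comp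
          (by fun_prop : ContinuousAt (fun y : ℝ => 1 - y) x)).continuousWithinAt)
    rw [← himg] at hIβ
    rw [MeasureTheory.integrableOn_image_iff_integrableOn_abs_deriv_smul measurableSet_Ioi hd hinj] at hIβ
    exact hIβ.congr_fun hptw measurableSet_Ioi

lemma main_integral {n ε : ℝ} (hn2 : 2 < n) (hε : 0 < ε) :
    IntegrableOn (fun r => r ^ (n-1) * (ε + r^2) ^ (-n)) (Ioi (0:ℝ))
    ∧ ∫ r in Ioi (0:ℝ), r ^ (n-1) * (ε + r^2) ^ (-n)
        = (Real.Gamma (n/2)^2 / (2 * Real.Gamma n)) * ε ^ (-n/2) := by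
  obtain ⟨hEq, hInt⟩ := cov_setup hn2 hε
  have hc : (0:ℝ) < 2 * ε ^ (n/2) := by positivity
  have hg : IntegrableOn (fun r => r ^ (n-1) * (ε + r^2) ^ (-n)) (Ioi (0:ℝ)) := by
    have h2 : IntegrableOn (fun r => (2 * ε ^ (n/2))⁻¹ * ((2 * ε ^ (n/2)) * (r ^ (n-1) * (ε + r^2) ^ (-n)))) (Ioi (0:ℝ)) :=
      hInt.const_mul ((2 * ε ^ (n/2))⁻¹)
    refine h2.congr_fun (fun r _ => ?_) measurableSet_Ioi
    field_simp
  refine ⟨hg, ?_⟩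
  have hval : (∫ u in Ioo (0:ℝ) 1, u ^ (n/2-1) * (1-u) ^ (n/2-1))
      = Real.Gamma (n/2)^2 / Real.Gamma n := by
    rw [← MeasureTheory.integral_Ioc_eq_integral_Ioo,
      ← intervalIntegral.integral_of_le (by norm_num : (0:ℝ) ≤ 1)]
    rw [real_beta (by linarith : (0:ℝ) < n/2) (by linarith : (0:ℝ) < n/2)]
    rw [show n/2 + n/2 = n by ring, sq]
  have hrhs : (∫ r in Ioi (0:ℝ), (2 * ε ^ (n/2)) * (r ^ (n-1) * (ε + r^2) ^ (-n)))
      = (2 * ε ^ (n/2)) * ∫ r in Ioi (0:ℝ), r ^ (n-1) * (ε + r^2) ^ (-n) :=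
    MeasureTheory.integral_const_mul _ _
  rw [hval, hrhs] at hEq
  have hGn : Real.Gamma n ≠ 0 := (Real.Gamma_pos_of_pos (by linarith)).ne'
  rw [show (-n/2 : ℝ) = -(n/2) by ring, Real.rpow_neg hε.le]
  have hen : ε ^ (n/2) ≠ 0 := by positivity
  field_simp at hEq ⊢
  linarith [hEq]


lemma taylor_bound {R : ℝ} (hR : 0 < R) {φ : ℝ → ℝ} (hφ : ContDiffOn ℝ 2 φ (Icc 0 R))
    (hφ'0 : derivWithin φ (Icc 0 R) 0 = 0) :
    ∃ K ≥ (0:ℝ), ∀ r ∈ Icc (0:ℝ) R, |φ r - φ 0| ≤ K * r^2 := by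
  set s : Set ℝ := Icc 0 R with hs
  have hu : UniqueDiffOn ℝ s := uniqueDiffOn_Icc hR
  set φ' : ℝ → ℝ := derivWithin φ s with hφ'
  have h1 : ContDiffOn ℝ 1 φ' s := hφ.derivWithin hu (by norm_num)
  have hc2 : ContinuousOn (derivWithin φ' s) s := h1.continuousOn_derivWithin hu (le_refl 1)
  obtain ⟨K, hK⟩ := isCompact_Icc.exists_bound_of_continuousOn hc2
  have h0s : (0:ℝ) ∈ s := ⟨le_refl 0, hR.le⟩
  have hK0 : 0 ≤ K := le_trans (norm_nonneg _) (hK 0 h0s)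
  have hlip : ∀ x ∈ s, |φ' x| ≤ K * x := by
    intro x hx
    have := Convex.norm_image_sub_le_of_norm_derivWithin_le
      (h1.differentiableOn (by norm_num)) hK (convex_Icc 0 R) h0s hx
    rw [hφ'0, sub_zero, Real.norm_eq_abs, Real.norm_eq_abs, sub_zero,
      abs_of_nonneg hx.1] at this
    exact this
  refine ⟨K, hK0, fun r hr => ?_⟩
  have hcont : ContinuousOn φ (Icc 0 r) := hφ.continuousOn.mono (Icc_subset_Icc le_rfl hr.2)
  have hderiv : ∀ x ∈ Ioo (0:ℝ) r, HasDerivWithinAt φ (φ' x) (Ioi x) x := by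
    intro x hx
    have hxs : x ∈ s := ⟨hx.1.le, le_trans hx.2.le hr.2⟩
    have hxR : x < R := lt_of_lt_of_le hx.2 hr.2
    have hd : HasDerivWithinAt φ (φ' x) s x :=
      ((hφ.differentiableOn (by norm_num)) x hxs).hasDerivWithinAt
    exact hd.mono_of_mem_nhdsWithin (mem_nhdsWithin_of_mem_nhds (Icc_mem_nhds hx.1 hxR))
  have hint : IntervalIntegrable φ' volume 0 r :=
    (h1.continuousOn.mono (Icc_subset_Icc le_rfl hr.2)).intervalIntegrable_of_Icc hr.1
  have key : ∫ x in (0:ℝ)..r, φ' x = φ r - φ 0 :=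
    intervalIntegral.integral_eq_sub_of_hasDeriv_right_of_le hr.1 hcont hderiv hint
  rw [← key]
  calc |∫ x in (0:ℝ)..r, φ' x| ≤ ∫ x in (0:ℝ)..r, |φ' x| :=
        intervalIntegral.abs_integral_le_integral_abs hr.1
    _ ≤ ∫ x in (0:ℝ)..r, K * x := by
        apply intervalIntegral.integral_mono_on hr.1 hint.abs
          ((by fun_prop : Continuous fun x : ℝ => K * x).intervalIntegrable 0 r)
        intro x hx
        exact hlip x ⟨hx.1, le_trans hx.2 hr.2⟩
    _ = K * (r^2/2) := by
        rw [intervalIntegral.integral_const_mul, integral_id]; ring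
    _ ≤ K * r^2 := by nlinarith [sq_nonneg r]


lemma rpow_lip {p B : ℝ} (hp : 1 ≤ p) (hB : 1 ≤ B) {x : ℝ} (hx : 0 ≤ x) (hxB : x ≤ B) :
    |x ^ p - 1| ≤ (p * B^(p-1)) * |x - 1| := by
  have hd : ∀ y ∈ Icc (0:ℝ) B, HasDerivWithinAt (fun t : ℝ => t ^ p) (p * y ^ (p-1)) (Icc 0 B) y := by
    intro y _
    exact (Real.hasDerivAt_rpow_const (Or.inr hp)).hasDerivWithinAt
  have hbound : ∀ y ∈ Icc (0:ℝ) B, ‖p * y ^ (p-1)‖ ≤ p * B^(p-1) := by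
    intro y hy
    rw [Real.norm_eq_abs, abs_of_nonneg (mul_nonneg (by linarith) (Real.rpow_nonneg hy.1 _))]
    exact mul_le_mul_of_nonneg_left
      (Real.rpow_le_rpow hy.1 hy.2 (by linarith)) (by linarith)
  have := (convex_Icc (0:ℝ) B).norm_image_sub_le_of_norm_hasDerivWithin_le hd hbound
    (⟨zero_le_one, hB⟩ : (1:ℝ) ∈ Icc (0:ℝ) B) (⟨hx, hxB⟩ : x ∈ Icc (0:ℝ) B)
  simpa [Real.one_rpow] using this


lemma sqrt_rpow' {ε : ℝ} (hε : 0 ≤ ε) (c : ℝ) : (Real.sqrt ε) ^ c = ε ^ (c/2) := by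
  rw [Real.sqrt_eq_rpow, ← Real.rpow_mul hε, show 1/2 * c = c/2 by ring]

lemma sq_mul_rpow {r : ℝ} (hr : 0 < r) (c : ℝ) : r^2 * r^c = r^(c+2) := by
  rw [← Real.rpow_natCast r 2, ← Real.rpow_add hr, show ((2:ℕ):ℝ) + c = c+2 by push_cast; ring]

lemma sq_rpow {r : ℝ} (hr : 0 ≤ r) (c : ℝ) : ((r^2:ℝ)) ^ c = r ^ (2*c) := by
  rw [← Real.rpow_natCast r 2, ← Real.rpow_mul hr]
  norm_num

lemma g_cont {n ε : ℝ} (hn2 : 2 < n) (hε : 0 < ε) :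
    Continuous (fun r : ℝ => r ^ (n-1) * (ε + r^2) ^ (-n)) := by
  have c1 : Continuous fun r:ℝ => r ^ (n-1) :=
    continuous_iff_continuousAt.mpr (fun x => Real.continuousAt_rpow_const x _ (Or.inr (by linarith)))
  have c2 : Continuous fun r:ℝ => (ε + r^2)^(-n) := by
    apply continuous_iff_continuousAt.mpr
    intro x
    exact (Real.continuousAt_rpow_const _ _ (Or.inl (by positivity))).comp (by fun_prop)
  exact c1.mul c2

lemma tail_bound {n ε R : ℝ} (hn2 : 2 < n) (hε : 0 < ε) (hR : 0 < R)
    (hgi : IntegrableOn (fun r : ℝ => r ^ (n-1) * (ε + r^2) ^ (-n)) (Ioi R)) :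
    ∫ r in Ioi R, r ^ (n-1) * (ε + r^2) ^ (-n) ≤ R^(-n)/n := by
  have hmaj : IntegrableOn (fun r : ℝ => r ^ (-n-1)) (Ioi R) :=
    integrableOn_Ioi_rpow_of_lt (by linarith) hR
  have hptw : ∀ r ∈ Ioi R, r ^ (n-1) * (ε + r^2) ^ (-n) ≤ r ^ (-n-1) := by
    intro r hr
    have hrp : (0:ℝ) < r := lt_trans hR hr
    have h1 : (ε + r^2 : ℝ) ^ (-n) ≤ ((r^2:ℝ)) ^ (-n) :=
      Real.rpow_le_rpow_of_nonpos (by positivity) (by linarith) (by linarith)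
    calc r ^ (n-1) * (ε + r^2) ^ (-n) ≤ r ^ (n-1) * ((r^2:ℝ)) ^ (-n) :=
          mul_le_mul_of_nonneg_left h1 (Real.rpow_nonneg hrp.le _)
      _ = r ^ (-n-1) := by
          rw [sq_rpow hrp.le, ← Real.rpow_add hrp, show n-1 + 2*(-n) = -n-1 by ring]
  calc ∫ r in Ioi R, r ^ (n-1) * (ε + r^2) ^ (-n) ≤ ∫ r in Ioi R, r ^ (-n-1) :=
        setIntegral_mono_on hgi hmaj measurableSet_Ioi hptw
    _ = R^(-n)/n := by
        rw [integral_Ioi_rpow_of_lt (by linarith) hR, show (-n-1)+1 = -n by ring]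
        field_simp

lemma core_bound {n ε R : ℝ} (hn2 : 2 < n) (hε : 0 < ε) (hR : 0 < R) :
    ∫ r in Ioc (0:ℝ) R, r^2 * (r ^ (n-1) * (ε + r^2) ^ (-n))
      ≤ (1/(n+2) + 1/(n-2)) * ε^((2-n)/2) := by
  set g : ℝ → ℝ := fun r => r ^ (n-1) * (ε + r^2) ^ (-n) with hg
  set F : ℝ → ℝ := fun r => r^2 * g r with hF
  have hFc : Continuous F := (continuous_pow 2).mul (g_cont hn2 hε)
  have hFnn : ∀ r : ℝ, 0 ≤ r → 0 ≤ F r := by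
    intro r hr
    exact mul_nonneg (by positivity) (mul_nonneg (Real.rpow_nonneg hr _) (Real.rpow_nonneg (by positivity) _))
  set t := Real.sqrt ε with hts
  have ht : 0 < t := Real.sqrt_pos.mpr hε
  have hFIoc : IntegrableOn F (Ioc 0 R) :=
    (hFc.continuousOn.integrableOn_compact isCompact_Icc).mono_set Ioc_subset_Icc_self
  have hsplit := integral_inter_add_diff (μ := volume) (f := F) (s := Ioc (0:ℝ) R)
      (t := Iic t) measurableSet_Iic hFIoc
  -- piece 1
  have h1 : ∫ r in Ioc (0:ℝ) R ∩ Iic t, F r ≤ (1/(n+2)) * ε^((2-n)/2) := by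
    have hsub : Ioc (0:ℝ) R ∩ Iic t ⊆ Ioc 0 t := fun r hr => ⟨hr.1.1, hr.2⟩
    have hInt_t : IntegrableOn F (Ioc 0 t) :=
      (hFc.continuousOn.integrableOn_compact isCompact_Icc).mono_set Ioc_subset_Icc_self
    have hMc : Continuous (fun r : ℝ => ε^(-n) * r^(n+1)) := by
      apply continuous_const.mul
      exact continuous_iff_continuousAt.mpr
        (fun x => Real.continuousAt_rpow_const x _ (Or.inr (by linarith)))
    have hMi : IntegrableOn (fun r : ℝ => ε^(-n) * r^(n+1)) (Ioc 0 t) :=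
      (hMc.continuousOn.integrableOn_compact isCompact_Icc).mono_set Ioc_subset_Icc_self
    have step1 : ∫ r in Ioc (0:ℝ) R ∩ Iic t, F r ≤ ∫ r in Ioc (0:ℝ) t, F r := by
      apply setIntegral_mono_set hInt_t
      · exact (ae_restrict_iff' measurableSet_Ioc).mpr
          (Filter.Eventually.of_forall (fun r hr => hFnn r hr.1.le))
      · exact HasSubset.Subset.eventuallyLE hsub
    have step2 : ∫ r in Ioc (0:ℝ) t, F r ≤ ∫ r in Ioc (0:ℝ) t, ε^(-n) * r^(n+1) := by
      apply setIntegral_mono_on hInt_t hMi measurableSet_Ioc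
      intro r hr
      have hrp : 0 < r := hr.1
      have hb : (ε + r^2 : ℝ) ^ (-n) ≤ ε ^ (-n) :=
        Real.rpow_le_rpow_of_nonpos hε (by nlinarith [sq_nonneg r]) (by linarith)
      calc F r = (r^2 * r^(n-1)) * (ε + r^2) ^ (-n) := by rw [hF]; ring
        _ ≤ (r^2 * r^(n-1)) * ε^(-n) := by
            apply mul_le_mul_of_nonneg_left hb
            have := Real.rpow_nonneg hrp.le (n-1)
            positivity
        _ = ε^(-n) * r^(n+1) := by
            rw [sq_mul_rpow hrp (n-1), show n-1+2 = n+1 by ring]; ring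
    have step3 : ∫ r in Ioc (0:ℝ) t, ε^(-n) * r^(n+1) = (1/(n+2)) * ε^((2-n)/2) := by
      rw [← intervalIntegral.integral_of_le ht.le, intervalIntegral.integral_const_mul,
        integral_rpow (Or.inl (by linarith : (-1:ℝ) < n+1)),
        Real.zero_rpow (by linarith : n+1+1 ≠ 0), sqrt_rpow' hε.le, sub_zero,
        show ε ^ (-n) * (ε^((n+1+1)/2)/(n+1+1)) = ε ^ (-n) * ε^((n+1+1)/2) * (1/(n+1+1)) by ring,
        ← Real.rpow_add hε, show -n + (n+1+1)/2 = (2-n)/2 by ring]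
      ring
    linarith
  -- piece 2
  have h2 : ∫ r in Ioc (0:ℝ) R \ Iic t, F r ≤ (1/(n-2)) * ε^((2-n)/2) := by
    have hs2m : MeasurableSet (Ioc (0:ℝ) R \ Iic t) := measurableSet_Ioc.diff measurableSet_Iic
    have hsub2 : Ioc (0:ℝ) R \ Iic t ⊆ Ioi t := fun r hr => (lt_of_not_ge hr.2 : t < r)
    have hFs2 : IntegrableOn F (Ioc (0:ℝ) R \ Iic t) := hFIoc.mono_set diff_subset
    have hmaj2 : IntegrableOn (fun r : ℝ => r^(1-n)) (Ioi t) :=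
      integrableOn_Ioi_rpow_of_lt (by linarith) ht
    have hmaj2' : IntegrableOn (fun r : ℝ => r^(1-n)) (Ioc (0:ℝ) R \ Iic t) :=
      hmaj2.mono_set hsub2
    have step1 : ∫ r in Ioc (0:ℝ) R \ Iic t, F r ≤ ∫ r in Ioc (0:ℝ) R \ Iic t, r^(1-n) := by
      apply setIntegral_mono_on hFs2 hmaj2' hs2m
      intro r hr
      have hrp : 0 < r := hr.1.1
      have hb : (ε + r^2 : ℝ) ^ (-n) ≤ ((r^2:ℝ)) ^ (-n) :=
        Real.rpow_le_rpow_of_nonpos (by positivity) (by linarith) (by linarith)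
      calc F r = (r^2 * r^(n-1)) * (ε + r^2) ^ (-n) := by rw [hF]; ring
        _ ≤ (r^2 * r^(n-1)) * ((r^2:ℝ)) ^ (-n) := by
            apply mul_le_mul_of_nonneg_left hb
            have := Real.rpow_nonneg hrp.le (n-1)
            positivity
        _ = r^(1-n) := by
            rw [sq_mul_rpow hrp (n-1), sq_rpow hrp.le, ← Real.rpow_add hrp,
              show n-1+2 + 2*(-n) = 1-n by ring]
    have step2 : ∫ r in Ioc (0:ℝ) R \ Iic t, r^(1-n) ≤ ∫ r in Ioi t, r^(1-n) := by
      apply setIntegral_mono_set hmaj2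
      · exact (ae_restrict_iff' measurableSet_Ioi).mpr
          (Filter.Eventually.of_forall
            (fun r hr => Real.rpow_nonneg (le_of_lt (lt_trans ht hr)) _))
      · exact HasSubset.Subset.eventuallyLE hsub2
    have step3 : ∫ r in Ioi t, r^(1-n) = (1/(n-2)) * ε^((2-n)/2) := by
      rw [integral_Ioi_rpow_of_lt (by linarith) ht, show (1-n)+1 = 2-n by ring,
        sqrt_rpow' hε.le]
      have hne : (2-n:ℝ) ≠ 0 := by linarith
      have hne2 : (n-2:ℝ) ≠ 0 := by linarith
      rw [div_eq_iff hne]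
      field_simp
      ring
    linarith
  have h3 := add_le_add h1 h2
  rw [hsplit] at h3
  exact h3.trans (le_of_eq (by ring))


end Helpers

/-- Claim 3.3: asymptotics, as `ε → 0⁺`, of the critical-power term
`∫_0^R v_ε^{2n/(n-2)} r^{n-1} dr` for the test function
`v_ε(r) = φ(r)(ε+r²)^{-(n-2)/2}`. -/
theorem critical_term_asymptotics (n R : ℝ) (hn2 : 2 < n) (hn4 : n < 4)
    (hR : 0 < R)
    (φ : ℝ → ℝ) (hφ : ContDiffOn ℝ 2 φ (Icc 0 R))
    (hφpos : ∀ r ∈ Icc (0:ℝ) R, 0 ≤ φ r)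
    (hφ0 : φ 0 = 1) (hφ'0 : derivWithin φ (Icc 0 R) 0 = 0) (hφR : φ R = 0) :
    ∃ C > (0:ℝ), ∃ ε0 > (0:ℝ), ∀ ε ∈ Ioo (0:ℝ) ε0,
      |(∫ r in (0:ℝ)..R, φ r ^ (2 * n / (n - 2)) * (ε + r ^ 2) ^ (-n) * r ^ (n - 1))
        - (Real.Gamma (n / 2) ^ 2 / (2 * Real.Gamma n)) * ε ^ (-n / 2)|
      ≤ C * ε ^ ((2 - n) / 2) := by
  have hn2' : (0:ℝ) < n - 2 := by linarith
  -- Taylor bound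
  obtain ⟨K, hK0, hTay⟩ := taylor_bound hR hφ hφ'0
  obtain ⟨M, hM⟩ := isCompact_Icc.exists_bound_of_continuousOn hφ.continuousOn
  set B := max M 1 with hBdef
  have hB : (1:ℝ) ≤ B := le_max_right _ _
  have hφB : ∀ r ∈ Icc (0:ℝ) R, φ r ≤ B := fun r hr =>
    (le_abs_self _).trans (((Real.norm_eq_abs _) ▸ hM r hr).trans (le_max_left _ _))
  set p : ℝ := 2 * n / (n - 2) with hpdef
  have hp : 1 ≤ p := by
    rw [hpdef, le_div_iff₀ hn2']; linarith
  have hL0 : (0:ℝ) ≤ p * B^(p-1) :=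
    mul_nonneg (by linarith) (Real.rpow_nonneg (by linarith) _)
  set A := (p * B^(p-1)) * K with hAdef
  have hA0 : 0 ≤ A := mul_nonneg hL0 hK0
  have hAbound : ∀ r ∈ Icc (0:ℝ) R, |φ r ^ p - 1| ≤ A * r^2 := by
    intro r hr
    calc |φ r ^ p - 1| ≤ (p * B^(p-1)) * |φ r - 1| := rpow_lip hp hB (hφpos r hr) (hφB r hr)
      _ = (p * B^(p-1)) * |φ r - φ 0| := by rw [hφ0]
      _ ≤ (p * B^(p-1)) * (K * r^2) := mul_le_mul_of_nonneg_left (hTay r hr) hL0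
      _ = A * r^2 := by rw [hAdef]; ring
  set C := A * (1/(n+2) + 1/(n-2)) + R^(-n)/n + 1 with hCdef
  have hRn : (0:ℝ) < R^(-n)/n := by
    apply div_pos (Real.rpow_pos_of_pos hR _) (by linarith)
  have hC : 0 < C := by
    rw [hCdef]
    have h1 : (0:ℝ) ≤ A * (1/(n+2) + 1/(n-2)) := by
      apply mul_nonneg hA0
      have : (0:ℝ) < 1/(n+2) := by positivity
      have : (0:ℝ) < 1/(n-2) := by positivity
      linarith
    linarith
  refine ⟨C, hC, 1, one_pos, ?_⟩
  rintro ε ⟨hε, hε1⟩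
  obtain ⟨hgInt, hgVal⟩ := main_integral hn2 hε
  set g : ℝ → ℝ := fun r => r ^ (n-1) * (ε + r^2) ^ (-n) with hgdef
  have hgnn : ∀ r : ℝ, 0 ≤ r → 0 ≤ g r := fun r hr =>
    mul_nonneg (Real.rpow_nonneg hr _) (Real.rpow_nonneg (by positivity) _)
  have hεpow : (1:ℝ) ≤ ε ^ ((2-n)/2) :=
    Real.one_le_rpow_of_pos_of_le_one_of_nonpos hε hε1.le (by linarith)
  have hεpow0 : (0:ℝ) < ε ^ ((2-n)/2) := Real.rpow_pos_of_pos hε _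
  -- convert interval integral
  have hIcnv : (∫ r in (0:ℝ)..R, φ r ^ (2 * n / (n - 2)) * (ε + r ^ 2) ^ (-n) * r ^ (n - 1))
      = ∫ r in Ioc (0:ℝ) R, φ r ^ p * g r := by
    rw [intervalIntegral.integral_of_le hR.le]
    exact setIntegral_congr_fun measurableSet_Ioc (fun r _ => by rw [hgdef, hpdef]; ring)
  rw [hIcnv]
  -- integrability facts
  have hgIoc : IntegrableOn g (Ioc (0:ℝ) R) := hgInt.mono_set Ioc_subset_Ioi_self
  have hgIoiR : IntegrableOn g (Ioi R) := hgInt.mono_set (Ioi_subset_Ioi hR.le)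
  have hφpInt : IntegrableOn (fun r => φ r ^ p * g r) (Ioc (0:ℝ) R) := by
    have contφp : ContinuousOn (fun r => φ r ^ p) (Icc (0:ℝ) R) :=
      hφ.continuousOn.rpow_const (fun x _ => Or.inr (by linarith))
    exact ((contφp.mul (g_cont hn2 hε).continuousOn).integrableOn_compact
      isCompact_Icc).mono_set Ioc_subset_Icc_self
  have hsubInt : IntegrableOn (fun r => (φ r ^ p - 1) * g r) (Ioc (0:ℝ) R) := by
    have h' : IntegrableOn (fun r => φ r ^ p * g r - g r) (Ioc (0:ℝ) R) := hφpInt.sub hgIoc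
    exact h'.congr_fun (fun r _ => by ring) measurableSet_Ioc
  -- split the reference integral
  have hsplitg : ∫ r in Ioi (0:ℝ), g r = (∫ r in Ioc (0:ℝ) R, g r) + ∫ r in Ioi R, g r := by
    rw [← Ioc_union_Ioi_eq_Ioi hR.le]
    exact setIntegral_union (Set.disjoint_left.mpr fun r h1 h2 => absurd h1.2 (not_le.mpr h2))
      measurableSet_Ioi hgIoc hgIoiR
  have hsub : ∫ r in Ioc (0:ℝ) R, (φ r ^ p - 1) * g r
      = (∫ r in Ioc (0:ℝ) R, φ r ^ p * g r) - ∫ r in Ioc (0:ℝ) R, g r := by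
    rw [← integral_sub hφpInt hgIoc]
    exact setIntegral_congr_fun measurableSet_Ioc (fun r _ => by ring)
  have hkey : (∫ r in Ioc (0:ℝ) R, φ r ^ p * g r)
        - (Real.Gamma (n / 2) ^ 2 / (2 * Real.Gamma n)) * ε ^ (-n / 2)
      = (∫ r in Ioc (0:ℝ) R, (φ r ^ p - 1) * g r) - ∫ r in Ioi R, g r := by
    rw [← hgVal, hsplitg, hsub]; ring
  rw [hkey]
  -- bound term 1
  have hT1 : |∫ r in Ioc (0:ℝ) R, (φ r ^ p - 1) * g r|
      ≤ A * (1/(n+2) + 1/(n-2)) * ε ^ ((2-n)/2) := by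
    have hmajInt : IntegrableOn (fun r => A * (r^2 * g r)) (Ioc (0:ℝ) R) :=
      ((continuous_const.mul ((continuous_pow 2).mul (g_cont hn2 hε))).continuousOn.integrableOn_compact
        isCompact_Icc).mono_set Ioc_subset_Icc_self
    calc |∫ r in Ioc (0:ℝ) R, (φ r ^ p - 1) * g r|
        ≤ ∫ r in Ioc (0:ℝ) R, |(φ r ^ p - 1) * g r| := by
          simpa only [Real.norm_eq_abs] using norm_integral_le_integral_norm
            (μ := volume.restrict (Ioc (0:ℝ) R)) (fun r => (φ r ^ p - 1) * g r)
      _ ≤ ∫ r in Ioc (0:ℝ) R, A * (r^2 * g r) := by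
          apply setIntegral_mono_on hsubInt.abs hmajInt measurableSet_Ioc
          intro r hr
          rw [abs_mul, abs_of_nonneg (hgnn r hr.1.le)]
          have h1 := hAbound r ⟨hr.1.le, hr.2⟩
          have h2 := hgnn r hr.1.le
          calc |φ r ^ p - 1| * g r ≤ (A * r^2) * g r :=
                mul_le_mul_of_nonneg_right h1 h2
            _ = A * (r^2 * g r) := by ring
      _ = A * ∫ r in Ioc (0:ℝ) R, r^2 * g r := integral_const_mul _ _
      _ ≤ A * ((1/(n+2) + 1/(n-2)) * ε ^ ((2-n)/2)) :=
          mul_le_mul_of_nonneg_left (core_bound hn2 hε hR) hA0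
      _ = A * (1/(n+2) + 1/(n-2)) * ε ^ ((2-n)/2) := by ring
  -- bound term 2
  have hT2 : |∫ r in Ioi R, g r| ≤ (R^(-n)/n) * ε ^ ((2-n)/2) := by
    rw [abs_of_nonneg (setIntegral_nonneg measurableSet_Ioi
      (fun r hr => hgnn r (le_of_lt (lt_trans hR hr))))]
    calc ∫ r in Ioi R, g r ≤ R^(-n)/n := tail_bound hn2 hε hR hgIoiR
      _ = (R^(-n)/n) * 1 := by ring
      _ ≤ (R^(-n)/n) * ε ^ ((2-n)/2) := mul_le_mul_of_nonneg_left hεpow hRn.le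
  calc |(∫ r in Ioc (0:ℝ) R, (φ r ^ p - 1) * g r) - ∫ r in Ioi R, g r|
      ≤ |∫ r in Ioc (0:ℝ) R, (φ r ^ p - 1) * g r| + |∫ r in Ioi R, g r| := abs_sub _ _
    _ ≤ A * (1/(n+2) + 1/(n-2)) * ε ^ ((2-n)/2) + (R^(-n)/n) * ε ^ ((2-n)/2) :=
        add_le_add hT1 hT2
    _ ≤ C * ε ^ ((2-n)/2) := by
        rw [hCdef]
        nlinarith [hεpow0]

end
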